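/- In the commutative ring R = Z/2[ξ, ξ^{-1}, τσ, u, a] (with ξ invertible), define e1 = a·u·τσ·ξ^{-1}, e2 = a²·τσ·ξ^{-1}, and τ = u²·τσ·ξ^{-1}. Then e1² = e2·τ, and the Z/2-algebra homomorphism Z/2[T, E1, E2]/(E1² - E2·T) → R sending T ↦ τ, E1 ↦ e1, E2 ↦ e2 is injective. -/

import Mathlib

noncomputable section

/-- The field `ℤ/2`. -/
abbrev k2 : Type := ZMod 2

/-- The ring `R = ℤ/2[ξ,ξ⁻¹,τσ,u,a]`: Laurent polynomials in `ξ` over `ℤ/2[τσ,u,a]`,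
with variables `0 = τσ`, `1 = u`, `2 = a`. -/
abbrev R10 : Type := LaurentPolynomial (MvPolynomial (Fin 3) k2)

open MvPolynomial LaurentPolynomial

/-- `ξ`. -/
def ξ10 : R10 := T 1

/-- `e₁ = a·u·τσ·ξ⁻¹`. -/
def e110 : R10 := LaurentPolynomial.C (X 2 * X 1 * X 0) * T (-1)

/-- `e₂ = a²·τσ·ξ⁻¹`. -/
def e210 : R10 := LaurentPolynomial.C (X 2 ^ 2 * X 0) * T (-1)

/-- `τ = u²·τσ·ξ⁻¹`. -/
def τ10 : R10 := LaurentPolynomial.C (X 1 ^ 2 * X 0) * T (-1)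

/-- The ideal `(E₁² - E₂T)` of `ℤ/2[T,E₁,E₂]`, with variables `0 = T`, `1 = E₁`, `2 = E₂`. -/
abbrev I10 : Ideal (MvPolynomial (Fin 3) k2) :=
  Ideal.span {X 1 ^ 2 - X 2 * X 0}

/-- The ring `ℤ/2[T,E₁,E₂]/(E₁² - E₂T)`. -/
abbrev A10 : Type := MvPolynomial (Fin 3) k2 ⧸ I10

def gA : R10 →ₐ[k2] MvPolynomial (Fin 2) k2 :=
  AddMonoidAlgebra.liftNCAlgHom (aeval ![1, X 0, X 1]) 1 (fun _ _ => Commute.one_right _)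

lemma gA_single (m : MvPolynomial (Fin 3) k2) (n : ℤ) :
    gA (LaurentPolynomial.C m * T n) = aeval ![1, (X 0 : MvPolynomial (Fin 2) k2), X 1] m := by
  rw [← single_eq_C_mul_T]
  show AddMonoidAlgebra.liftNC _ _ _ = _
  rw [AddMonoidAlgebra.liftNC_single]
  simp

def h' : MvPolynomial (Fin 3) k2 →ₐ[k2] MvPolynomial (Fin 2) k2 :=
  aeval ![X 0 ^ 2, X 0 * X 1, X 1 ^ 2]

def g2 : (Fin 2 →₀ ℕ) → A10 := fun v =>
  if Even (v 0) then
    (if Even (v 1) then Ideal.Quotient.mk I10 (X 0 ^ (v 0 / 2) * X 2 ^ (v 1 / 2)) else 0)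
  else
    (if Even (v 1) then 0
     else Ideal.Quotient.mk I10 (X 1 * X 0 ^ (v 0 / 2) * X 2 ^ (v 1 / 2)))

def ψ : MvPolynomial (Fin 2) k2 →ₗ[k2] A10 :=
  Finsupp.lsum k2 (fun v => LinearMap.toSpanSingleton k2 A10 (g2 v)) ∘ₗ
    (AddMonoidAlgebra.coeffLinearEquiv k2).toLinearMap

lemma psi_monomial (v : Fin 2 →₀ ℕ) (c : k2) : ψ (monomial v c) = c • g2 v := by
  rw [← single_eq_monomial]
  rw [ψ, LinearMap.comp_apply]
  simp [AddMonoidAlgebra.coeffLinearEquiv]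

lemma hsq : (Ideal.Quotient.mk I10 (X 1)) ^ 2
    = Ideal.Quotient.mk I10 (X 2) * Ideal.Quotient.mk I10 (X 0) := by
  rw [← map_pow, ← map_mul, Ideal.Quotient.mk_eq_mk_iff_sub_mem]
  exact Ideal.subset_span rfl

lemma h'_monomial (u : Fin 3 →₀ ℕ) (c : k2) :
    h' (monomial u c)
      = monomial (Finsupp.single 0 (2 * u 0 + u 1) + Finsupp.single 1 (u 1 + 2 * u 2)) c := by
  rw [monomial_eq, Finsupp.prod_pow, Fin.prod_univ_three]
  simp only [map_mul, map_pow, h', aeval_X, aeval_C]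
  simp only [Matrix.cons_val_zero, Matrix.cons_val_one, Matrix.head_cons, Matrix.cons_val_two,
    Matrix.tail_cons]
  rw [MvPolynomial.algebraMap_eq, mul_pow, ← pow_mul, ← pow_mul]
  rw [show (X 0 ^ (2 * u 0) * (X 0 ^ u 1 * X 1 ^ u 1) * X 1 ^ (2 * u 2) : MvPolynomial (Fin 2) k2)
      = X 0 ^ (2 * u 0 + u 1) * X 1 ^ (u 1 + 2 * u 2) by rw [pow_add, pow_add]; ring]
  rw [X_pow_eq_monomial, X_pow_eq_monomial, monomial_mul, mul_one, C_mul_monomial, mul_one]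

lemma key_monomial (u : Fin 3 →₀ ℕ) (c : k2) :
    ψ (h' (monomial u c)) = Ideal.Quotient.mk I10 (monomial u c) := by
  rw [h'_monomial, psi_monomial]
  have hv0 : ((Finsupp.single 0 (2 * u 0 + u 1)
      + Finsupp.single 1 (u 1 + 2 * u 2) : Fin 2 →₀ ℕ)) 0 = 2 * u 0 + u 1 := by
    simp
  have hv1 : ((Finsupp.single 0 (2 * u 0 + u 1)
      + Finsupp.single 1 (u 1 + 2 * u 2) : Fin 2 →₀ ℕ)) 1 = u 1 + 2 * u 2 := by
    simp
  rw [monomial_eq, Finsupp.prod_pow, Fin.prod_univ_three, map_mul, map_mul, map_mul,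
    map_pow, map_pow, map_pow]
  rcases (by decide : ∀ c : k2, c = 0 ∨ c = 1) c with rfl | rfl
  · simp
  · rw [one_smul, show (Ideal.Quotient.mk I10) (MvPolynomial.C (1:k2)) = 1 by simp, one_mul]
    unfold g2
    rw [hv0, hv1]
    rcases Nat.even_or_odd (u 1) with ⟨m, hm⟩ | ⟨m, hm⟩
    · rw [if_pos (by rw [Nat.even_iff]; omega), if_pos (by rw [Nat.even_iff]; omega)]
      rw [show (2 * u 0 + u 1) / 2 = u 0 + m by omega, show (u 1 + 2 * u 2) / 2 = m + u 2 by omega]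
      rw [map_mul, map_pow, map_pow, hm, show m + m = 2 * m by ring, pow_mul, hsq]
      ring
    · rw [if_neg (by rw [Nat.even_iff]; omega), if_neg (by rw [Nat.even_iff]; omega)]
      rw [show (2 * u 0 + u 1) / 2 = u 0 + m by omega, show (u 1 + 2 * u 2) / 2 = m + u 2 by omega]
      rw [map_mul, map_mul, map_pow, map_pow, hm, pow_succ, pow_mul, hsq]
      ring

lemma key (p : MvPolynomial (Fin 3) k2) : ψ (h' p) = Ideal.Quotient.mk I10 p := by
  induction p using MvPolynomial.induction_on' with
  | monomial u c => exact key_monomial u c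
  | add p q hp hq => rw [map_add, map_add, map_add, hp, hq]

lemma gA_C (m : MvPolynomial (Fin 3) k2) :
    gA (LaurentPolynomial.C m) = aeval ![1, (X 0 : MvPolynomial (Fin 2) k2), X 1] m := by
  rw [show (LaurentPolynomial.C m : R10) = LaurentPolynomial.C m * T 0 by rw [T_zero, mul_one],
    gA_single]

lemma gA_T (n : ℤ) : gA (T n) = 1 := by
  rw [show (T n : R10) = LaurentPolynomial.C 1 * T n by rw [map_one, one_mul], gA_single, map_one]

lemma hI : ∀ a ∈ I10, (aeval ![τ10, e110, e210] : MvPolynomial (Fin 3) k2 →ₐ[k2] R10) a = 0 := by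
  intro a ha
  rw [Ideal.mem_span_singleton] at ha
  obtain ⟨b, rfl⟩ := ha
  rw [map_mul, map_sub, map_pow, map_mul]
  simp only [aeval_X, Matrix.cons_val_zero, Matrix.cons_val_one, Matrix.head_cons,
    Matrix.cons_val_two, Matrix.tail_cons]
  rw [show e110 ^ 2 = e210 * τ10 by
      rw [e110, e210, τ10, mul_pow, ← map_pow, mul_mul_mul_comm, ← map_mul, ← T_add, T_pow]
      norm_num; left; ring]
  ring

lemma hcomp (p : MvPolynomial (Fin 3) k2) :
    gA ((aeval ![τ10, e110, e210] : MvPolynomial (Fin 3) k2 →ₐ[k2] R10) p) = h' p := by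
  have : gA.comp (aeval ![τ10, e110, e210]) = h' := by
    apply MvPolynomial.algHom_ext
    intro i
    fin_cases i <;>
      simp [h', τ10, e110, e210, gA_C, gA_T] <;> ring
  exact DFunLike.congr_fun this p

set_option synthInstance.maxHeartbeats 1000000 in
/-- in `R = ℤ/2[ξ,ξ⁻¹,τσ,u,a]`, with `e₁ = auτσξ⁻¹`, `e₂ = a²τσξ⁻¹` and
`τ = u²τσξ⁻¹`, we have `e₁² = e₂τ`, and the `ℤ/2`-algebra homomorphism
`ℤ/2[T,E₁,E₂]/(E₁² - E₂T) → R` sending `T ↦ τ`, `E₁ ↦ e₁`, `E₂ ↦ e₂` is injective. -/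
theorem stmt10 :
    e110 ^ 2 = e210 * τ10 ∧
    ∃ f : A10 →ₐ[k2] R10,
      f (Ideal.Quotient.mk I10 (X 0)) = τ10 ∧
      f (Ideal.Quotient.mk I10 (X 1)) = e110 ∧
      f (Ideal.Quotient.mk I10 (X 2)) = e210 ∧
      Function.Injective f := by

  have part1 : e110 ^ 2 = e210 * τ10 := by
    rw [e110, e210, τ10, mul_pow, ← map_pow, mul_mul_mul_comm, ← map_mul, ← T_add, T_pow]
    norm_num; left; ring
  refine ⟨part1, Ideal.Quotient.liftₐ I10 (aeval ![τ10, e110, e210]) hI, ?_, ?_, ?_, ?_⟩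
  · rw [Ideal.Quotient.liftₐ_apply]; erw [Ideal.Quotient.lift_mk]
    simp
  · rw [Ideal.Quotient.liftₐ_apply]; erw [Ideal.Quotient.lift_mk]
    simp
  · rw [Ideal.Quotient.liftₐ_apply]; erw [Ideal.Quotient.lift_mk]
    simp
  · intro x y hxy
    obtain ⟨p, rfl⟩ := Ideal.Quotient.mk_surjective x
    obtain ⟨q, rfl⟩ := Ideal.Quotient.mk_surjective y
    have h2 := congrArg gA hxy
    rw [Ideal.Quotient.liftₐ_apply, Ideal.Quotient.liftₐ_apply] at h2
    erw [Ideal.Quotient.lift_mk, Ideal.Quotient.lift_mk] at h2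
    simp only [RingHom.coe_coe] at h2
    rw [hcomp p, hcomp q] at h2
    rw [← key p, ← key q, h2]
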